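/- For any two σ-interpretations I and I', every homomorphism from I to I' can be extended to a homomorphism from SHR(I) to SHR(I'); conversely, the restriction to dom(I) of any homomorphism from SHR(I) to SHR(I') is a homomorphism from I to I'. -/

import Mathlib

/-- A relational signature: relation names with arities. -/
structure Sig : Type 1 where
  Rel : Type
  ar : Rel → ℕ

/-- An interpretation of a signature: a domain and, for each relation,
a set of tuples (lists of the right length). -/
structure Interp (σ : Sig) : Type 1 where
  Dom : Type
  rel : σ.Rel → Set (List Dom)
  wf : ∀ R l, l ∈ rel R → l.length = σ.ar R

/-- An atom over variables `V`. -/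
structure Atom (σ : Sig) (V : Type) where
  R : σ.Rel
  args : Fin (σ.ar R) → V

/-- A conjunction of atoms over variables `V`. -/
abbrev Conj (σ : Sig) (V : Type) := List (Atom σ V)

def Atom.vmap {σ : Sig} {V W : Type} (f : V → W) (A : Atom σ V) : Atom σ W :=
  ⟨A.R, f ∘ A.args⟩

def Conj.vmap {σ : Sig} {V W : Type} (f : V → W) (Φ : Conj σ V) : Conj σ W :=
  Φ.map (Atom.vmap f)

def satAtom {σ : Sig} (I : Interp σ) {V : Type} (ν : V → I.Dom) (A : Atom σ V) : Prop :=
  (List.ofFn fun i => ν (A.args i)) ∈ I.rel A.R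

def satConj {σ : Sig} (I : Interp σ) {V : Type} (ν : V → I.Dom) (Φ : Conj σ V) : Prop :=
  ∀ A ∈ Φ, satAtom I ν A

/-- A variable occurs in an atom. -/
def occursIn {σ : Sig} {V : Type} (v : V) (A : Atom σ V) : Prop := ∃ i, A.args i = v

/-- The Gaifman graph of a conjunction of atoms. -/
def gaifmanC {σ : Sig} {V : Type} (Φ : Conj σ V) : SimpleGraph V where
  Adj u v := u ≠ v ∧ ∃ A ∈ Φ, occursIn u A ∧ occursIn v A
  symm := by
    constructor
    intro u v h
    exact ⟨h.1.symm, by obtain ⟨A, hA, h1, h2⟩ := h.2; exact ⟨A, hA, h2, h1⟩⟩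
  loopless := by constructor; intro v h; exact h.1 rfl

/-- The Gaifman graph of an interpretation. -/
def gaifmanI {σ : Sig} (I : Interp σ) : SimpleGraph I.Dom where
  Adj a b := a ≠ b ∧ ∃ R l, l ∈ I.rel R ∧ a ∈ l ∧ b ∈ l
  symm := by
    constructor
    intro a b h
    exact ⟨h.1.symm, by obtain ⟨R, l, hl, h1, h2⟩ := h.2; exact ⟨R, l, hl, h2, h1⟩⟩
  loopless := by constructor; intro a h; exact h.1 rfl

/-- The relation names of the shredded signature. -/
inductive SRel (σ : Sig) : Type
  | low (R : σ.Rel) (h : σ.ar R ≤ 2)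
  | elt
  | tag (R : σ.Rel) (h : 2 < σ.ar R)
  | proj (R : σ.Rel) (h : 2 < σ.ar R) (i : Fin (σ.ar R))

/-- The shredded signature σs. -/
def sSig (σ : Sig) : Sig where
  Rel := SRel σ
  ar := fun r => match r with
    | .low R _ => σ.ar R
    | .elt => 1
    | .tag _ _ => 1
    | .proj _ _ _ => 2

/-- Shredding of an atom (with the fresh tuple variable `t`). -/
def shredAtom {σ : Sig} {V T : Type} (A : Atom σ V) (t : T) : Conj (sSig σ) (V ⊕ T) :=
  if h : σ.ar A.R ≤ 2 then
    [⟨SRel.low A.R h, fun i => Sum.inl (A.args i)⟩]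
  else
    ⟨SRel.tag A.R (lt_of_not_ge h), fun _ => Sum.inr t⟩ ::
    (List.finRange (σ.ar A.R)).map (fun i =>
      ⟨SRel.proj A.R (lt_of_not_ge h) i,
       fun j => if j.val = 0 then Sum.inr t else Sum.inl (A.args i)⟩)

/-- Shredding of a conjunction of atoms: one fresh variable per atom. -/
def shredConj {σ : Sig} {V : Type} (Φ : Conj σ V) : Conj (sSig σ) (V ⊕ Fin Φ.length) :=
  (List.finRange Φ.length).flatMap (fun k => shredAtom (Φ.get k) k)

/-- The fresh elements of the shredding of an interpretation: one per higher-arity tuple. -/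
def HighTuple {σ : Sig} (I : Interp σ) : Type :=
  Σ R : σ.Rel, {l : List I.Dom // l ∈ I.rel R ∧ 2 < σ.ar R}

/-- The shredding of an interpretation. -/
def shredInterp {σ : Sig} (I : Interp σ) : Interp (sSig σ) where
  Dom := I.Dom ⊕ HighTuple I
  rel := fun r => match r with
    | .low R _ => {l | ∃ l₀ ∈ I.rel R, l = l₀.map Sum.inl}
    | .elt => {l | ∃ a : I.Dom, l = [Sum.inl a]}
    | .tag R _ => {l | ∃ t : HighTuple I, t.1 = R ∧ l = [Sum.inr t]}
    | .proj R _ i => {l | ∃ t : HighTuple I, t.1 = R ∧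
        ∃ a : I.Dom, t.2.val[i.val]? = some a ∧ l = [Sum.inr t, Sum.inl a]}
  wf := by
    rintro r l hl
    cases r with
    | low R h => obtain ⟨l₀, h₀, rfl⟩ := hl; simpa [sSig] using I.wf R l₀ h₀
    | elt => obtain ⟨a, rfl⟩ := hl; rfl
    | tag R h => obtain ⟨t, _, rfl⟩ := hl; rfl
    | proj R h i => obtain ⟨t, _, a, _, rfl⟩ := hl; rfl

/-- Homomorphisms of interpretations. -/
def IsHom {σ : Sig} (I I' : Interp σ) (h : I.Dom → I'.Dom) : Prop :=
  ∀ R l, l ∈ I.rel R → l.map h ∈ I'.rel R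

/-- Existential rules: body over variables `B`, head over `B ⊕ E`
(`B`-variables occurring in the head are the frontier). -/
structure ExRule (σ : Sig) : Type 1 where
  B : Type
  E : Type
  body : Conj σ B
  head : Conj σ (B ⊕ E)

def satRule {σ : Sig} (I : Interp σ) (τ : ExRule σ) : Prop :=
  ∀ ν : τ.B → I.Dom, satConj I ν τ.body →
    ∃ μ : τ.E → I.Dom, satConj I (Sum.elim ν μ) τ.head

/-- Shredding of an existential rule. -/
def shredRule {σ : Sig} (τ : ExRule σ) : ExRule (sSig σ) where
  B := τ.B ⊕ Fin τ.body.length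
  E := τ.E ⊕ Fin τ.head.length
  body := shredConj τ.body
  head := (shredConj τ.head).vmap
    (Sum.elim (Sum.elim (Sum.inl ∘ Sum.inl) (Sum.inr ∘ Sum.inl)) (fun k => Sum.inr (Sum.inr k)))

/-- every homomorphism from `I` to `I'` extends to a homomorphism
from `SHR(I)` to `SHR(I')`, and conversely every homomorphism from `SHR(I)` to
`SHR(I')` restricts (on `dom(I)`) to a homomorphism from `I` to `I'`. -/
theorem shredding_homomorphisms (σ : Sig) (I I' : Interp σ) :
    (∀ h : I.Dom → I'.Dom, IsHom I I' h →
      ∃ H : (shredInterp I).Dom → (shredInterp I').Dom,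
        IsHom (shredInterp I) (shredInterp I') H ∧
        ∀ a : I.Dom, H (Sum.inl a) = Sum.inl (h a)) ∧
    (∀ H : (shredInterp I).Dom → (shredInterp I').Dom,
      IsHom (shredInterp I) (shredInterp I') H →
      ∃ h : I.Dom → I'.Dom, IsHom I I' h ∧
        ∀ a : I.Dom, H (Sum.inl a) = Sum.inl (h a)) := by
  constructor
  · intro h hh
    refine ⟨Sum.elim (fun a => Sum.inl (h a))
      (fun t => Sum.inr ⟨t.1, ⟨t.2.val.map h, hh t.1 t.2.val t.2.2.1, t.2.2.2⟩⟩), ?_, fun a => rfl⟩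
    rintro r l hl
    cases r with
    | low R hr =>
      obtain ⟨l₀, h₀, rfl⟩ := hl
      exact ⟨l₀.map h, hh R l₀ h₀, (List.map_map ..).trans (List.map_map (f := h) (g := Sum.inl) (l := l₀)).symm⟩
    | elt =>
      obtain ⟨a, rfl⟩ := hl
      exact ⟨h a, rfl⟩
    | tag R hr =>
      obtain ⟨t, ht, rfl⟩ := hl
      exact ⟨⟨t.1, ⟨t.2.val.map h, hh t.1 t.2.val t.2.2.1, t.2.2.2⟩⟩, ht, rfl⟩
    | proj R hr i =>
      obtain ⟨t, ht, a, hget, rfl⟩ := hl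
      refine ⟨⟨t.1, ⟨t.2.val.map h, hh t.1 t.2.val t.2.2.1, t.2.2.2⟩⟩, ht, h a, ?_, rfl⟩
      show (t.2.val.map h)[i.val]? = some (h a)
      rw [List.getElem?_map, hget]
      rfl
  · intro H HH
    have key : ∀ a : I.Dom, ∃ a' : I'.Dom, H (Sum.inl a) = Sum.inl a' := by
      intro a
      obtain ⟨a', ha'⟩ := HH .elt [Sum.inl a] ⟨a, rfl⟩
      exact ⟨a', (List.cons_eq_cons.mp ha').1⟩
    choose h hH using key
    refine ⟨h, ?_, hH⟩
    intro R l hl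
    by_cases har : σ.ar R ≤ 2
    · obtain ⟨l₀, hl₀, heq⟩ := HH (.low R har) (l.map Sum.inl) ⟨l, hl, rfl⟩
      have h1 : (l.map Sum.inl).map H = (l.map h).map Sum.inl := by
        exact (List.map_map ..).trans ((List.map_congr_left (fun a _ => hH a)).trans (List.map_map ..).symm)
      replace heq := h1.symm.trans heq
      rwa [← List.map_injective_iff.mpr Sum.inl_injective heq] at hl₀
    · have har' : 2 < σ.ar R := lt_of_not_ge har
      set t : HighTuple I := ⟨R, ⟨l, hl, har'⟩⟩ with ht_def
      obtain ⟨t', ht'R, heq⟩ := HH (.tag R har') [Sum.inr t] ⟨t, rfl, rfl⟩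
      obtain ⟨R', l', hl', har''⟩ := t'
      obtain rfl : R = R' := ht'R.symm
      set t' : HighTuple I' := ⟨R, ⟨l', hl', har''⟩⟩ with ht'_def
      have hHt : H (Sum.inr t) = Sum.inr t' := (List.cons_eq_cons.mp heq).1
      have hlen : l.length = σ.ar R := I.wf R l hl
      have hlen' : l'.length = σ.ar R := I'.wf R l' hl'
      have hget : ∀ i : Fin (σ.ar R), l'[i.val]? = some (h (l.get ⟨i.val, by omega⟩)) := by
        intro i
        have hgl : l[i.val]? = some (l.get ⟨i.val, by omega⟩) := List.getElem?_eq_getElem _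
        obtain ⟨t'', ht''R, a', ha', heq2⟩ :=
          HH (.proj R har' i) [Sum.inr t, Sum.inl (l.get ⟨i.val, by omega⟩)]
            ⟨t, rfl, l.get ⟨i.val, by omega⟩, hgl, rfl⟩
        replace heq2 : [Sum.inr t', Sum.inl (h (l.get ⟨i.val, by omega⟩))] = [Sum.inr t'', Sum.inl a'] :=
          (congrArg₂ List.cons hHt (congrArg₂ List.cons (hH _) rfl)).symm.trans heq2
        obtain ⟨h1, h2⟩ := List.cons_eq_cons.mp heq2
        obtain ⟨h3, -⟩ := List.cons_eq_cons.mp h2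
        rw [← Sum.inr_injective h1] at ha'
        rw [ha', ← Sum.inl_injective h3]
      have hfin : l' = l.map h := by
        apply List.ext_getElem?
        intro n
        by_cases hn : n < σ.ar R
        · rw [hget ⟨n, hn⟩, List.getElem?_map, List.getElem?_eq_getElem (by omega : n < l.length)]
          rfl
        · rw [List.getElem?_eq_none (by omega), List.getElem?_eq_none (by simp; omega)]
      rwa [hfin] at hl'
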